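/- If G is a complete multipartite graph on n vertices with p partite sets, q of which are singletons, then dim(G) = n − p if q = 0, and dim(G) = n − p + q − 1 if q ≥ 1. -/

import Mathlib

open SimpleGraph Function
open scoped Classical

/-- A set `S` is a resolving set of `G`: every pair of distinct vertices differ in
distance to some element of `S`. -/
def IsResolving {V : Type*} (G : SimpleGraph V) (S : Set V) : Prop :=
  ∀ x y : V, x ≠ y → ∃ s ∈ S, G.dist s x ≠ G.dist s y

/-- A fault-tolerant resolving set: removing any single vertex leaves a resolving set. -/
def IsFTResolving {V : Type*} (G : SimpleGraph V) (S : Set V) : Prop :=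
  ∀ s ∈ S, IsResolving G (S \ {s})

/-- The metric dimension of `G`. -/
noncomputable def metricDim {V : Type*} [Fintype V] (G : SimpleGraph V) : ℕ :=
  sInf {n | ∃ S : Finset V, IsResolving G ↑S ∧ S.card = n}

/-- The fault-tolerant metric dimension of `G`. -/
noncomputable def ftDim {V : Type*} [Fintype V] (G : SimpleGraph V) : ℕ :=
  sInf {n | ∃ S : Finset V, IsFTResolving G ↑S ∧ S.card = n}

/-- `S` is a `k`-resolving set: every pair of distinct vertices is distinguished
by at least `k` vertices of `S`. -/
def IsKResolving {V : Type*} [Fintype V] (G : SimpleGraph V) (k : ℕ) (S : Finset V) : Prop :=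
  ∀ x y : V, x ≠ y → k ≤ (S.filter (fun s => G.dist s x ≠ G.dist s y)).card

/-- The `k`-metric dimension of `G`. -/
noncomputable def kMetricDim {V : Type*} [Fintype V] (G : SimpleGraph V) (k : ℕ) : ℕ :=
  sInf {n | ∃ S : Finset V, IsKResolving G k S ∧ S.card = n}

/-- The complete multipartite graph determined by a coloring `f : V → ι`: two vertices
are adjacent iff they lie in different parts (fibers of `f`). -/
def completeMultipartiteOn {V ι : Type*} (f : V → ι) : SimpleGraph V where
  Adj x y := f x ≠ f y
  symm := ⟨fun _ _ h => h.symm⟩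
  loopless := ⟨fun _ h => h rfl⟩

section
variable {V ι : Type*} [Fintype V] [Fintype ι] (f : V → ι)

noncomputable def fibC (i : ι) : ℕ := (Finset.univ.filter (fun v : V => f v = i)).card

lemma cmp_dist (hf : Surjective f) (hp : 2 ≤ Fintype.card ι) (s x : V) :
    (completeMultipartiteOn f).dist s x = if s = x then 0 else if f s = f x then 2 else 1 := by
  split_ifs with h1 h2
  · subst h1; exact SimpleGraph.dist_self
  · obtain ⟨j, hj⟩ := Fintype.exists_ne_of_one_lt_card hp (f s)
    obtain ⟨w, rfl⟩ := hf j
    have hadj1 : (completeMultipartiteOn f).Adj s w := show f s ≠ f w from fun h => hj h.symm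
    have hadj2 : (completeMultipartiteOn f).Adj w x := show f w ≠ f x from fun h => hj (h.trans h2.symm)
    have hle : (completeMultipartiteOn f).dist s x ≤ 2 := by
      have := SimpleGraph.dist_le
        (SimpleGraph.Walk.cons hadj1 (SimpleGraph.Walk.cons hadj2 SimpleGraph.Walk.nil))
      simpa using this
    have hpos : 0 < (completeMultipartiteOn f).dist s x :=
      SimpleGraph.Reachable.pos_dist_of_ne
        ⟨SimpleGraph.Walk.cons hadj1 (SimpleGraph.Walk.cons hadj2 SimpleGraph.Walk.nil)⟩ h1
    have hne1 : (completeMultipartiteOn f).dist s x ≠ 1 := by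
      intro h
      exact (show f s ≠ f x from SimpleGraph.dist_eq_one_iff_adj.mp h) h2
    omega
  · exact SimpleGraph.dist_eq_one_iff_adj.mpr (show (completeMultipartiteOn f).Adj s x from h2)

variable {f}

/-- a vertex of S itself resolves pairs containing it -/
lemma resolve_self (hf : Surjective f) (hp : 2 ≤ Fintype.card ι) {S : Finset V} {x y : V}
    (hx : x ∈ S) (hxy : x ≠ y) :
    ∃ s ∈ (S : Set V), (completeMultipartiteOn f).dist s x ≠ (completeMultipartiteOn f).dist s y := by
  refine ⟨x, hx, ?_⟩
  rw [cmp_dist f hf hp, cmp_dist f hf hp]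
  simp only [if_pos rfl, if_neg hxy]
  split_ifs <;> omega

/-- a same-part companion of x in S resolves x from y (different part) -/
lemma resolve_helper (hf : Surjective f) (hp : 2 ≤ Fintype.card ι) {S : Finset V} {x y w : V}
    (hxy : f x ≠ f y) (hwx : w ≠ x) (hwf : f w = f x) (hwS : w ∈ S) :
    ∃ s ∈ (S : Set V), (completeMultipartiteOn f).dist s x ≠ (completeMultipartiteOn f).dist s y := by
  refine ⟨w, hwS, ?_⟩
  rw [cmp_dist f hf hp, cmp_dist f hf hp]
  rw [if_neg hwx, if_pos hwf]
  have : f w ≠ f y := hwf ▸ hxy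
  split_ifs <;> omega

/-- f is injective on the complement of a resolving set -/
lemma inj_on_compl (hf : Surjective f) (hp : 2 ≤ Fintype.card ι) {S : Finset V}
    (hS : IsResolving (completeMultipartiteOn f) ↑S) {u v : V}
    (hu : u ∉ S) (hv : v ∉ S) (huv : u ≠ v) : f u ≠ f v := by
  intro hfe
  obtain ⟨s, hsS, hd⟩ := hS u v huv
  have hsu : s ≠ u := fun h => hu (h ▸ hsS)
  have hsv : s ≠ v := fun h => hv (h ▸ hsS)
  rw [cmp_dist f hf hp, cmp_dist f hf hp, if_neg hsu, if_neg hsv] at hd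
  rw [hfe] at hd
  exact hd rfl

/-- at most one vertex from a singleton part avoids a resolving set -/
lemma singleton_avoid (hf : Surjective f) (hp : 2 ≤ Fintype.card ι) {S : Finset V}
    (hS : IsResolving (completeMultipartiteOn f) ↑S) {u v : V}
    (hu : u ∉ S) (hv : v ∉ S) (huv : u ≠ v)
    (h1 : fibC f (f u) = 1) (h2 : fibC f (f v) = 1) : False := by
  have hfibu : Finset.univ.filter (fun w : V => f w = f u) = {u} := by
    obtain ⟨a, ha⟩ := Finset.card_eq_one.mp h1
    have : u ∈ Finset.univ.filter (fun w : V => f w = f u) := by simp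
    rw [ha] at this
    rw [ha, Finset.mem_singleton.mp this]
  have hfibv : Finset.univ.filter (fun w : V => f w = f v) = {v} := by
    obtain ⟨a, ha⟩ := Finset.card_eq_one.mp h2
    have : v ∈ Finset.univ.filter (fun w : V => f w = f v) := by simp
    rw [ha] at this
    rw [ha, Finset.mem_singleton.mp this]
  obtain ⟨s, hsS, hd⟩ := hS u v huv
  have hsu : s ≠ u := fun h => hu (h ▸ hsS)
  have hsv : s ≠ v := fun h => hv (h ▸ hsS)
  have hfu : f s ≠ f u := by
    intro h
    have : s ∈ Finset.univ.filter (fun w : V => f w = f u) := by simp [h]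
    rw [hfibu, Finset.mem_singleton] at this
    exact hsu this
  have hfv : f s ≠ f v := by
    intro h
    have : s ∈ Finset.univ.filter (fun w : V => f w = f v) := by simp [h]
    rw [hfibv, Finset.mem_singleton] at this
    exact hsv this
  rw [cmp_dist f hf hp, cmp_dist f hf hp, if_neg hsu, if_neg hsv,
    if_neg hfu, if_neg hfv] at hd
  exact hd rfl

/-- upper bound construction -/
lemma upper_construction (hf : Surjective f) (hp : 2 ≤ Fintype.card ι) (I : Finset ι)
    (hI : ∀ i ∈ I, ∀ j ∈ I, i ≠ j → fibC f i ≠ 1 ∨ fibC f j ≠ 1) :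
    IsResolving (completeMultipartiteOn f) ↑((I.image (surjInv hf))ᶜ) := by
  set g := surjInv hf with hg
  have hfg : ∀ i, f (g i) = i := fun i => surjInv_eq hf i
  set T := I.image g with hT
  have memT : ∀ x, x ∈ T → x = g (f x) ∧ f x ∈ I := by
    intro x hx
    obtain ⟨i, hi, rfl⟩ := Finset.mem_image.mp hx
    rw [hfg]
    exact ⟨rfl, hi⟩
  intro x y hxy
  by_cases hxS : x ∈ Tᶜ
  · exact resolve_self hf hp hxS hxy
  by_cases hyS : y ∈ Tᶜ
  · obtain ⟨s, hs, hd⟩ := resolve_self hf hp hyS hxy.symm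
    exact ⟨s, hs, hd.symm⟩
  rw [Finset.mem_compl, not_not] at hxS hyS
  obtain ⟨hxg, hxI⟩ := memT x hxS
  obtain ⟨hyg, hyI⟩ := memT y hyS
  have hfxy : f x ≠ f y := by
    intro h
    exact hxy (hxg.trans (h ▸ hyg.symm))
  have key : ∀ z : V, z ∈ T → fibC f (f z) ≠ 1 →
      ∃ w, w ≠ z ∧ f w = f z ∧ w ∈ Tᶜ := by
    intro z hz hcz
    have hzfib : z ∈ Finset.univ.filter (fun v : V => f v = f z) := by simp
    have hcard : 1 < fibC f (f z) := by
      have := Finset.card_pos.mpr ⟨z, hzfib⟩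
      unfold fibC at hcz ⊢
      omega
    obtain ⟨w, hwfib, hwz⟩ := Finset.exists_mem_ne hcard z
    have hwf : f w = f z := (Finset.mem_filter.mp hwfib).2
    refine ⟨w, hwz, hwf, ?_⟩
    rw [Finset.mem_compl]
    intro hwT
    obtain ⟨hwg, _⟩ := memT w hwT
    exact hwz (hwg.trans (by rw [hwf, ← (memT z hz).1]))
  rcases hI (f x) hxI (f y) hyI hfxy with h | h
  · obtain ⟨w, hwx, hwf, hwS⟩ := key x hxS h
    exact resolve_helper hf hp hfxy hwx hwf hwS
  · obtain ⟨w, hwy, hwf, hwS⟩ := key y hyS h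
    obtain ⟨s, hs, hd⟩ := resolve_helper hf hp hfxy.symm hwy hwf hwS
    exact ⟨s, hs, hd.symm⟩

end

theorem stmt3 {V ι : Type*} [Fintype V] [Fintype ι] (f : V → ι) (hf : Surjective f)
    (hp : 2 ≤ Fintype.card ι) (n p q : ℕ)
    (hn : n = Fintype.card V) (hpdef : p = Fintype.card ι)
    (hq : q = (Finset.univ.filter
      (fun i : ι => (Finset.univ.filter (fun v : V => f v = i)).card = 1)).card) :
    metricDim (completeMultipartiteOn f) =
      if q = 0 then n - p else n - p + q - 1 := by
  have hq' : q = (Finset.univ.filter (fun i : ι => fibC f i = 1)).card := hq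
  have hnp : p ≤ n := by
    rw [hn, hpdef]; exact Fintype.card_le_of_surjective f hf
  have hqp : q ≤ p := by
    rw [hq', hpdef]
    exact le_trans (Finset.card_filter_le _ _) (by simp)
  set m := if q = 0 then n - p else n - p + q - 1 with hm
  set A := Finset.univ.filter (fun i : ι => fibC f i = 1) with hA
  set B := Finset.univ.filter (fun i : ι => ¬ fibC f i = 1) with hB
  have hAB : A.card + B.card = p := by
    rw [hA, hB, hpdef, Finset.card_filter_add_card_filter_not]
    simp [Finset.card_univ]
  have hBcard : B.card = p - q := by omega
  -- existence of a good index set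
  have hex : ∃ I : Finset ι,
      (∀ i ∈ I, ∀ j ∈ I, i ≠ j → fibC f i ≠ 1 ∨ fibC f j ≠ 1) ∧
      I.card = p - q + (if q = 0 then 0 else 1) := by
    by_cases h0 : q = 0
    · have hAempty : A = ∅ := Finset.card_eq_zero.mp (by omega)
      refine ⟨Finset.univ, ?_, ?_⟩
      · intro i _ _ _ _
        left
        intro h1
        have : i ∈ A := Finset.mem_filter.mpr ⟨Finset.mem_univ _, h1⟩
        rw [hAempty] at this
        exact absurd this (Finset.notMem_empty _)
      · rw [if_pos h0, Finset.card_univ, ← hpdef]; omega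
    · have hAne : A.Nonempty := Finset.card_pos.mp (by omega)
      obtain ⟨i₀, hi₀⟩ := hAne
      have hi₀1 : fibC f i₀ = 1 := (Finset.mem_filter.mp hi₀).2
      refine ⟨Finset.univ.filter (fun i => ¬ fibC f i = 1 ∨ i = i₀), ?_, ?_⟩
      · intro i hi j hj hij
        by_contra hcon
        push_neg at hcon
        obtain ⟨h1, h2⟩ := hcon
        have hii : i = i₀ := by
          rcases (Finset.mem_filter.mp hi).2 with h | h
          · exact absurd h1 h
          · exact h
        have hjj : j = i₀ := by
          rcases (Finset.mem_filter.mp hj).2 with h | h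
          · exact absurd h2 h
          · exact h
        exact hij (hii.trans hjj.symm)
      · have hneg : Finset.univ.filter (fun i : ι => ¬ (¬ fibC f i = 1 ∨ i = i₀))
            = A.erase i₀ := by
          ext i
          simp only [Finset.mem_filter, Finset.mem_univ, true_and, Finset.mem_erase,
            hA, not_or, not_not]
          tauto
        have hsum := Finset.card_filter_add_card_filter_not
          (s := Finset.univ) (p := fun i : ι => ¬ fibC f i = 1 ∨ i = i₀)
        rw [hneg, Finset.card_univ, ← hpdef,
          Finset.card_erase_of_mem hi₀] at hsum
        rw [if_neg h0]
        omega
  obtain ⟨I, hI, hIcard⟩ := hex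
  -- the resolving set
  set S₀ := (I.image (surjInv hf))ᶜ with hS₀
  have hres : IsResolving (completeMultipartiteOn f) ↑S₀ :=
    upper_construction hf hp I hI
  have hTcard : (I.image (surjInv hf)).card = I.card :=
    Finset.card_image_of_injective _ (injective_surjInv hf)
  have hS₀card : S₀.card = m := by
    have h1 : S₀.card + (I.image (surjInv hf)).card = n := by
      rw [hS₀, hn]
      rw [Finset.card_compl]
      have := Finset.card_le_univ (I.image (surjInv hf))
      omega
    rw [hTcard, hIcard] at h1
    rw [hm]
    split_ifs at h1 ⊢ with h0 <;> omega
  have hmem : m ∈ {k | ∃ S : Finset V,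
      IsResolving (completeMultipartiteOn f) ↑S ∧ S.card = k} := ⟨S₀, hres, hS₀card⟩
  -- lower bound
  have hlow : ∀ k ∈ {k | ∃ S : Finset V,
      IsResolving (completeMultipartiteOn f) ↑S ∧ S.card = k}, m ≤ k := by
    rintro k ⟨S, hS, rfl⟩
    set T := Sᶜ with hT
    have hcards : S.card + T.card = n := by
      rw [hT, hn]; exact Finset.card_add_card_compl S
    have hinj : ∀ u ∈ T, ∀ v ∈ T, f u = f v → u = v := by
      intro u hu v hv hfe
      by_contra huv
      exact inj_on_compl hf hp hS (Finset.mem_compl.mp hu) (Finset.mem_compl.mp hv) huv hfe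
    set T1 := T.filter (fun t => fibC f (f t) = 1) with hT1
    set T2 := T.filter (fun t => ¬ fibC f (f t) = 1) with hT2
    have hT12 : T1.card + T2.card = T.card :=
      Finset.card_filter_add_card_filter_not _
    have hT1le1 : T1.card ≤ 1 := by
      rw [Finset.card_le_one]
      intro a ha b hb
      by_contra hab
      obtain ⟨haT, ha1⟩ := Finset.mem_filter.mp ha
      obtain ⟨hbT, hb1⟩ := Finset.mem_filter.mp hb
      exact singleton_avoid hf hp hS (Finset.mem_compl.mp haT) (Finset.mem_compl.mp hbT)
        hab ha1 hb1
    have hT1q : T1.card ≤ q := by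
      have himg : T1.image f ⊆ A := by
        intro i hi
        obtain ⟨t, ht, rfl⟩ := Finset.mem_image.mp hi
        exact Finset.mem_filter.mpr ⟨Finset.mem_univ _, (Finset.mem_filter.mp ht).2⟩
      have hinj1 : (T1.image f).card = T1.card := Finset.card_image_of_injOn
        (fun a ha b hb => hinj a (Finset.mem_filter.mp ha).1 b (Finset.mem_filter.mp hb).1)
      rw [hq', ← hinj1]
      exact Finset.card_le_card himg
    have hT2pq : T2.card ≤ p - q := by
      have himg : T2.image f ⊆ B := by
        intro i hi
        obtain ⟨t, ht, rfl⟩ := Finset.mem_image.mp hi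
        exact Finset.mem_filter.mpr ⟨Finset.mem_univ _, (Finset.mem_filter.mp ht).2⟩
      have hinj2 : (T2.image f).card = T2.card := Finset.card_image_of_injOn
        (fun a ha b hb => hinj a (Finset.mem_filter.mp ha).1 b (Finset.mem_filter.mp hb).1)
      rw [← hBcard, ← hinj2]
      exact Finset.card_le_card himg
    rw [hm]
    split_ifs with h0 <;> omega
  show sInf _ = m
  exact le_antisymm (Nat.sInf_le hmem) (le_csInf ⟨m, hmem⟩ hlow)
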